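/- arXiv:1704.02174 — 2 statements merged into one kernel-verified Lean document; each statement's English description precedes it below -/
import Mathlib

section
/- Let 0 < α < 1 and 0 ≤ μ < 1 with μ ≤ α. If f ∈ C_μ[a,b] (i.e., (x-a)^μ f(x) extends continuously to [a,b]), then I_{a+}^α f extends to a continuous function on [a,b]; in particular I_{a+}^α maps C_μ[a,b] boundedly into C[a,b]. -/
open Real Set MeasureTheory intervalIntegral

/-- Riemann–Liouville fractional integral of order `α > 0` based at `a`. -/
noncomputable def RLint (a α : ℝ) (f : ℝ → ℝ) (x : ℝ) : ℝ :=
  if α = 0 then f x else (1 / Real.Gamma α) * ∫ t in a..x, (x - t) ^ (α - 1) * f t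

/-- `f ∈ C_μ[a,b]`: the weighted function `(x-a)^μ f(x)` on `(a,b]` extends
continuously to `[a,b]`, with extension `F`. -/
def IsWeightedExt (a b μ : ℝ) (f F : ℝ → ℝ) : Prop :=
  ContinuousOn F (Set.Icc a b) ∧ ∀ x ∈ Set.Ioc a b, F x = (x - a) ^ μ * f x

lemma beta_integrable {α μ : ℝ} (hα0 : 0 < α) (hα1 : α ≤ 1) (hμ0 : 0 ≤ μ) (hμ1 : μ < 1) :
    IntegrableOn (fun s : ℝ => (1 - s) ^ (α - 1) * s ^ (-μ)) (Ioo 0 1) := by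
  have hsub : Ioo (0:ℝ) 1 ⊆ Ioc 0 (1/2) ∪ Ioo (1/2) 1 := by
    intro s hs
    rcases le_or_gt s (1/2) with h | h
    · exact Or.inl ⟨hs.1, h⟩
    · exact Or.inr ⟨h, hs.2⟩
  refine IntegrableOn.mono_set ?_ hsub
  apply IntegrableOn.union
  · -- on Ioc 0 (1/2)
    have hmeas : AEStronglyMeasurable (fun s : ℝ => (1 - s) ^ (α - 1) * s ^ (-μ))
        (volume.restrict (Ioc 0 (1/2))) := by
      apply ContinuousOn.aestronglyMeasurable _ measurableSet_Ioc
      apply ContinuousOn.mul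
      · apply ContinuousOn.rpow_const (by fun_prop)
        intro s hs
        exact Or.inl (by nlinarith [hs.2])
      · apply ContinuousOn.rpow_const (by fun_prop)
        intro s hs
        exact Or.inl (ne_of_gt hs.1)
    have hbnd : Integrable (fun s : ℝ => (1/2 : ℝ) ^ (α - 1) * s ^ (-μ))
        (volume.restrict (Ioc 0 (1/2))) := by
      have : IntervalIntegrable (fun s : ℝ => s ^ (-μ)) volume 0 (1/2) :=
        intervalIntegral.intervalIntegrable_rpow' (by linarith)
      have := (intervalIntegrable_iff_integrableOn_Ioc_of_le (by norm_num)).mp this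
      exact this.const_mul _
    refine Integrable.mono' hbnd hmeas ?_
    filter_upwards [ae_restrict_mem measurableSet_Ioc] with s hs
    have h1 : (0:ℝ) < 1 - s ∨ True := Or.inr trivial
    have hs0 : (0:ℝ) < s := hs.1
    have h12 : (1/2 : ℝ) ≤ 1 - s := by linarith [hs.2]
    have hb : (1 - s) ^ (α - 1) ≤ (1/2 : ℝ) ^ (α - 1) :=
      Real.rpow_le_rpow_of_nonpos (by norm_num) h12 (by linarith)
    rw [Real.norm_eq_abs, abs_mul, abs_of_nonneg (Real.rpow_nonneg (by linarith [hs.2]) _),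
      abs_of_nonneg (Real.rpow_nonneg hs0.le _)]
    exact mul_le_mul_of_nonneg_right hb (Real.rpow_nonneg hs0.le _)
  · -- on Ioo (1/2) 1
    have hmeas : AEStronglyMeasurable (fun s : ℝ => (1 - s) ^ (α - 1) * s ^ (-μ))
        (volume.restrict (Ioo (1/2) 1)) := by
      apply ContinuousOn.aestronglyMeasurable _ measurableSet_Ioo
      apply ContinuousOn.mul
      · apply ContinuousOn.rpow_const (by fun_prop)
        intro s hs
        exact Or.inl (by nlinarith [hs.2])
      · apply ContinuousOn.rpow_const (by fun_prop)
        intro s hs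
        exact Or.inl (by nlinarith [hs.1])
    have hbnd : Integrable (fun s : ℝ => (1 - s) ^ (α - 1) * (1/2 : ℝ) ^ (-μ))
        (volume.restrict (Ioo (1/2) 1)) := by
      have h0 : IntervalIntegrable (fun s : ℝ => s ^ (α - 1)) volume 0 (1/2) :=
        intervalIntegral.intervalIntegrable_rpow' (by linarith)
      have h1 := (h0.comp_sub_left 1).symm
      rw [show (1:ℝ) - 1/2 = 1/2 by norm_num, sub_zero] at h1
      have h2 := h1.def'
      rw [uIoc_of_le (by norm_num : (1/2:ℝ) ≤ 1)] at h2
      exact (h2.mono_set Ioo_subset_Ioc_self).mul_const _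
    refine Integrable.mono' hbnd hmeas ?_
    filter_upwards [ae_restrict_mem measurableSet_Ioo] with s hs
    have hb : s ^ (-μ) ≤ (1/2 : ℝ) ^ (-μ) :=
      Real.rpow_le_rpow_of_nonpos (by norm_num) hs.1.le (by linarith)
    rw [Real.norm_eq_abs, abs_mul, abs_of_nonneg (Real.rpow_nonneg (by linarith [hs.2]) _),
      abs_of_nonneg (Real.rpow_nonneg (by linarith [hs.1]) _)]
    exact mul_le_mul_of_nonneg_left hb (Real.rpow_nonneg (by linarith [hs.2]) _)

theorem rl_integral_maps_Cmu_into_C (a b α μ : ℝ) (hab : a < b)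
    (hα0 : 0 < α) (hα1 : α < 1) (hμ0 : 0 ≤ μ) (hμ1 : μ < 1) (hμα : μ ≤ α) :
    ∃ C > 0, ∀ (f F : ℝ → ℝ), IsWeightedExt a b μ f F →
      ∃ g : ℝ → ℝ, ContinuousOn g (Set.Icc a b) ∧
        (∀ x ∈ Set.Ioc a b, g x = RLint a α f x) ∧
        ∀ x ∈ Set.Icc a b, |g x| ≤ C * sSup ((fun y => |F y|) '' Set.Icc a b) := by
  have hβ := beta_integrable hα0 hα1.le hμ0 hμ1
  set I : ℝ := ∫ s in Ioo (0:ℝ) 1, (1 - s) ^ (α - 1) * s ^ (-μ) with hI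
  have hΓ : 0 < Real.Gamma α := Real.Gamma_pos_of_pos hα0
  have hI0 : 0 ≤ I := by
    apply setIntegral_nonneg measurableSet_Ioo
    intro s hs
    exact mul_nonneg (Real.rpow_nonneg (by linarith [hs.2]) _)
      (Real.rpow_nonneg hs.1.le _)
  have hba : (0:ℝ) ≤ b - a := by linarith
  refine ⟨(1 / Real.Gamma α) * ((b - a) ^ (α - μ) * I) + 1, by positivity, ?_⟩
  intro f F hF
  set M : ℝ := sSup ((fun y => |F y|) '' Set.Icc a b) with hMdef
  have hcomp : IsCompact ((fun y => |F y|) '' Set.Icc a b) :=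
    isCompact_Icc.image_of_continuousOn hF.1.abs
  have hM : ∀ y ∈ Set.Icc a b, |F y| ≤ M := fun y hy =>
    le_csSup hcomp.bddAbove ⟨y, hy, rfl⟩
  have hM0 : 0 ≤ M := le_trans (abs_nonneg _) (hM a ⟨le_refl a, hab.le⟩)
  -- the parametric integral
  set G : ℝ → ℝ := fun x =>
    ∫ s in Ioo (0:ℝ) 1, (1 - s) ^ (α - 1) * s ^ (-μ) * F (a + (x - a) * s) with hGdef
  have hmaps : ∀ x ∈ Set.Icc a b, ∀ s ∈ Ioo (0:ℝ) 1, a + (x - a) * s ∈ Set.Icc a b := by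
    intro x hx s hs
    constructor
    · nlinarith [hx.1, hs.1.le]
    · nlinarith [hx.1, hx.2, hs.1.le, hs.2.le]
  have hβcont : ContinuousOn (fun s : ℝ => (1 - s) ^ (α - 1) * s ^ (-μ)) (Ioo 0 1) := by
    apply ContinuousOn.mul
    · exact ContinuousOn.rpow_const (by fun_prop) fun s hs => Or.inl (by nlinarith [hs.2])
    · exact ContinuousOn.rpow_const (by fun_prop) fun s hs => Or.inl (ne_of_gt hs.1)
  have hGcont : ContinuousOn G (Set.Icc a b) := by
    apply continuousOn_of_dominated (bound := fun s => (1 - s) ^ (α - 1) * s ^ (-μ) * M)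
    · intro x hx
      apply ContinuousOn.aestronglyMeasurable _ measurableSet_Ioo
      exact hβcont.mul ((hF.1.comp (by fun_prop) (fun s hs => hmaps x hx s hs)))
    · intro x hx
      filter_upwards [ae_restrict_mem measurableSet_Ioo] with s hs
      rw [Real.norm_eq_abs, abs_mul]
      have h1 : (0:ℝ) ≤ (1 - s) ^ (α - 1) * s ^ (-μ) :=
        mul_nonneg (Real.rpow_nonneg (by linarith [hs.2]) _) (Real.rpow_nonneg hs.1.le _)
      rw [abs_of_nonneg h1]
      exact mul_le_mul_of_nonneg_left (hM _ (hmaps x hx s hs)) h1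
    · exact hβ.mul_const M
    · filter_upwards [ae_restrict_mem measurableSet_Ioo] with s hs
      exact continuousOn_const.mul
        (hF.1.comp (by fun_prop) (fun x hx => hmaps x hx s hs))
  refine ⟨fun x => (1 / Real.Gamma α) * ((x - a) ^ (α - μ) * G x), ?_, ?_, ?_⟩
  · apply continuousOn_const.mul
    apply ContinuousOn.mul _ hGcont
    exact ((continuous_id.sub continuous_const).rpow_const
      (fun x => Or.inr (by linarith))).continuousOn
  · -- equality with RLint on Ioc a b
    intro x hx
    have hxa : (0:ℝ) < x - a := by linarith [hx.1]
    show (1 / Real.Gamma α) * ((x - a) ^ (α - μ) * G x) = RLint a α f x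
    rw [RLint, if_neg hα0.ne']
    congr 1
    -- step 1: replace f by the weighted form
    have e1 : ∫ t in a..x, (x - t) ^ (α - 1) * f t
        = ∫ t in a..x, (x - t) ^ (α - 1) * ((t - a) ^ (-μ) * F t) := by
      apply intervalIntegral.integral_congr_ae
      apply Filter.Eventually.of_forall
      intro t ht
      rw [uIoc_of_le (by linarith [hx.1] : a ≤ x)] at ht
      have hta : (0:ℝ) < t - a := by linarith [ht.1]
      rw [hF.2 t ⟨ht.1, le_trans ht.2 hx.2⟩,
        show (t - a) ^ (-μ) * ((t - a) ^ μ * f t) = f t from by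
          rw [← mul_assoc, ← Real.rpow_add hta]; norm_num]
    -- step 2: substitution t = a + (x-a) s
    have e2 := intervalIntegral.smul_integral_comp_mul_add (a := (0:ℝ)) (b := 1)
      (fun t => (x - t) ^ (α - 1) * ((t - a) ^ (-μ) * F t)) (x - a) a
    rw [mul_zero, zero_add, mul_one, sub_add_cancel] at e2
    -- step 3: split the powers
    have e3 : ∫ s in (0:ℝ)..1,
        (x - ((x - a) * s + a)) ^ (α - 1) * (((x - a) * s + a - a) ^ (-μ) * F ((x - a) * s + a))
        = ((x - a) ^ (α - 1) * (x - a) ^ (-μ)) *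
          ∫ s in (0:ℝ)..1, (1 - s) ^ (α - 1) * s ^ (-μ) * F (a + (x - a) * s) := by
      rw [← intervalIntegral.integral_const_mul]
      apply intervalIntegral.integral_congr
      intro s hs
      rw [uIcc_of_le (by norm_num : (0:ℝ) ≤ 1)] at hs
      dsimp only
      have h1 : x - ((x - a) * s + a) = (x - a) * (1 - s) := by ring
      have h2 : (x - a) * s + a - a = (x - a) * s := by ring
      have h3 : (x - a) * s + a = a + (x - a) * s := by ring
      rw [h1, h2, h3, Real.mul_rpow hxa.le (by linarith [hs.2]),
        Real.mul_rpow hxa.le hs.1]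
      ring
    have e4 : (∫ s in (0:ℝ)..1, (1 - s) ^ (α - 1) * s ^ (-μ) * F (a + (x - a) * s)) = G x := by
      rw [intervalIntegral.integral_of_le (by norm_num : (0:ℝ) ≤ 1),
        integral_Ioc_eq_integral_Ioo]
    rw [e1, ← e2, e3, e4, smul_eq_mul]
    rw [show α - μ = 1 + (α - 1) + -μ by ring, Real.rpow_add hxa, Real.rpow_add hxa,
      Real.rpow_one]
    ring
  · -- the bound
    intro x hx
    have hxa : (0:ℝ) ≤ x - a := by linarith [hx.1]
    have hGbnd : |G x| ≤ I * M := by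
      rw [← Real.norm_eq_abs]
      have := norm_integral_le_of_norm_le (μ := volume.restrict (Ioo (0:ℝ) 1))
        (f := fun s => (1 - s) ^ (α - 1) * s ^ (-μ) * F (a + (x - a) * s))
        (g := fun s => (1 - s) ^ (α - 1) * s ^ (-μ) * M)
        (hβ.mul_const M) ?_
      · rw [MeasureTheory.integral_mul_const] at this
        exact this
      · filter_upwards [ae_restrict_mem measurableSet_Ioo] with s hs
        rw [Real.norm_eq_abs, abs_mul]
        have h1 : (0:ℝ) ≤ (1 - s) ^ (α - 1) * s ^ (-μ) :=
          mul_nonneg (Real.rpow_nonneg (by linarith [hs.2]) _) (Real.rpow_nonneg hs.1.le _)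
        rw [abs_of_nonneg h1]
        exact mul_le_mul_of_nonneg_left (hM _ (hmaps x hx s hs)) h1
    rw [abs_mul, abs_mul, abs_of_pos (by positivity : (0:ℝ) < 1 / Real.Gamma α),
      abs_of_nonneg (Real.rpow_nonneg hxa _)]
    have hpow : (x - a) ^ (α - μ) ≤ (b - a) ^ (α - μ) :=
      Real.rpow_le_rpow hxa (by linarith [hx.2]) (by linarith)
    calc (1 / Real.Gamma α) * ((x - a) ^ (α - μ) * |G x|)
        ≤ (1 / Real.Gamma α) * ((b - a) ^ (α - μ) * (I * M)) := by
          apply mul_le_mul_of_nonneg_left _ (by positivity)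
          apply mul_le_mul hpow hGbnd (abs_nonneg _) (Real.rpow_nonneg hba _)
      _ = (1 / Real.Gamma α) * ((b - a) ^ (α - μ) * I) * M := by ring
      _ ≤ ((1 / Real.Gamma α) * ((b - a) ^ (α - μ) * I) + 1) * M := by nlinarith
end

section
/- (Generalized Gronwall, constant case) Suppose β > 0, C ≥ 0, g ≥ 0 constants, and u is nonnegative, locally integrable on [0,T) with u(t) ≤ C + g ∫_0^t (t-s)^{β-1} u(s) ds for all t ∈ [0,T). Then u(t) ≤ C · E_β(g Γ(β) t^β) for all t ∈ [0,T), where E_β(z) = Σ_{k=0}^∞ z^k / Γ(kβ + 1) is the Mittag-Leffler function. -/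
open Real Set MeasureTheory intervalIntegral
open scoped ENNReal

/-- One-parameter Mittag-Leffler function `E_β(z) = Σ_{k≥0} z^k / Γ(kβ+1)`. -/
noncomputable def mittagLeffler (β z : ℝ) : ℝ :=
  ∑' k : ℕ, z ^ k / Real.Gamma (k * β + 1)

open Real Set MeasureTheory intervalIntegral

lemma real_beta01 {a b : ℝ} (ha : 0 < a) (hb : 0 < b) :
    Real.Gamma a * Real.Gamma b
      = Real.Gamma (a + b) * ∫ x in (0:ℝ)..1, x ^ (a - 1) * (1 - x) ^ (b - 1) := by
  have h := Complex.Gamma_mul_Gamma_eq_betaIntegral (s := (a:ℂ)) (t := (b:ℂ))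
    (by simpa using ha) (by simpa using hb)
  have hbint : Complex.betaIntegral (a:ℂ) (b:ℂ)
      = ((∫ x in (0:ℝ)..1, x ^ (a - 1) * (1 - x) ^ (b - 1) : ℝ) : ℂ) := by
    rw [Complex.betaIntegral]
    rw [← intervalIntegral.integral_ofReal]
    apply intervalIntegral.integral_congr
    intro x hx
    rw [Set.uIcc_of_le (by norm_num : (0:ℝ) ≤ 1)] at hx
    obtain ⟨hx0, hx1⟩ := hx
    show (x:ℂ) ^ ((a:ℂ) - 1) * (1 - (x:ℂ)) ^ ((b:ℂ) - 1) = ((x ^ (a - 1) * (1 - x) ^ (b - 1) : ℝ) : ℂ)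
    rw [show ((a:ℂ) - 1) = ((a - 1 : ℝ) : ℂ) by push_cast; ring,
      show ((b:ℂ) - 1) = ((b - 1 : ℝ) : ℂ) by push_cast; ring,
      show (1 - (x:ℂ)) = ((1 - x : ℝ) : ℂ) by push_cast; ring,
      Complex.ofReal_mul, ← Complex.ofReal_cpow hx0,
      ← Complex.ofReal_cpow (by linarith : (0:ℝ) ≤ 1 - x)]
  rw [hbint] at h
  have := Complex.Gamma_ofReal
  rw [← Complex.ofReal_add, Complex.Gamma_ofReal, Complex.Gamma_ofReal,
    Complex.Gamma_ofReal, ← Complex.ofReal_mul, ← Complex.ofReal_mul] at h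
  exact_mod_cast h

lemma beta_value {a b r t : ℝ} (ha : 0 < a) (hb : 0 < b) (hrt : r < t) :
    ∫ s in r..t, (t - s) ^ (a - 1) * (s - r) ^ (b - 1)
      = (t - r) ^ (a + b - 1) * (Real.Gamma a * Real.Gamma b / Real.Gamma (a + b)) := by
  have hc : (0:ℝ) < t - r := by linarith
  have key := intervalIntegral.integral_comp_mul_add
    (f := fun s => (t - s) ^ (a - 1) * (s - r) ^ (b - 1)) (a := 0) (b := 1) hc.ne' r
  simp only [mul_zero, zero_add, mul_one] at key
  have hre : t - r + r = t := by ring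
  rw [hre] at key
  have hLHS : (∫ x in (0:ℝ)..1,
        (t - ((t - r) * x + r)) ^ (a - 1) * ((t - r) * x + r - r) ^ (b - 1))
      = (t - r) ^ (a - 1) * (t - r) ^ (b - 1)
        * ∫ x in (0:ℝ)..1, x ^ (b - 1) * (1 - x) ^ (a - 1) := by
    rw [← intervalIntegral.integral_const_mul]
    apply intervalIntegral.integral_congr
    intro x hx
    rw [Set.uIcc_of_le (by norm_num : (0:ℝ) ≤ 1)] at hx
    obtain ⟨hx0, hx1⟩ := hx
    dsimp only
    have e1 : t - ((t - r) * x + r) = (t - r) * (1 - x) := by ring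
    have e2 : (t - r) * x + r - r = (t - r) * x := by ring
    rw [e1, e2, Real.mul_rpow hc.le (by linarith), Real.mul_rpow hc.le hx0]
    ring
  have hB : (∫ x in (0:ℝ)..1, x ^ (b - 1) * (1 - x) ^ (a - 1))
      = Real.Gamma a * Real.Gamma b / Real.Gamma (a + b) := by
    have h0 := real_beta01 hb ha
    have hpos : 0 < Real.Gamma (b + a) := Real.Gamma_pos_of_pos (by linarith)
    rw [add_comm b a] at h0
    field_simp at h0 ⊢
    linarith [h0]
  rw [hLHS, hB] at key
  have hI : (∫ s in r..t, (t - s) ^ (a - 1) * (s - r) ^ (b - 1))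
      = (t - r) * ((t - r) ^ (a - 1) * (t - r) ^ (b - 1)
          * (Real.Gamma a * Real.Gamma b / Real.Gamma (a + b))) := by
    rw [key, smul_eq_mul, ← mul_assoc, mul_inv_cancel₀ hc.ne', one_mul]
  have e3 : (t - r) * ((t - r) ^ (a - 1) * (t - r) ^ (b - 1)
        * (Real.Gamma a * Real.Gamma b / Real.Gamma (a + b)))
      = (t - r) ^ (a + b - 1) * (Real.Gamma a * Real.Gamma b / Real.Gamma (a + b)) := by
    rw [show (t - r) ^ (a - 1) * (t - r) ^ (b - 1) = (t - r) ^ (a + b - 2) by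
        rw [← Real.rpow_add hc]; ring_nf,
      show a + b - 1 = a + b - 2 + 1 by ring, Real.rpow_add_one hc.ne']
    ring
  rw [hI, e3]

lemma beta_integrable_s9 {a b r t : ℝ} (ha : 0 < a) (hb : 0 < b) (hrt : r < t) :
    IntervalIntegrable (fun s => (t - s) ^ (a - 1) * (s - r) ^ (b - 1)) volume r t := by
  set m := (r + t) / 2 with hm
  have hm1 : r < m := by rw [hm]; linarith
  have hm2 : m < t := by rw [hm]; linarith
  have left : IntervalIntegrable (fun s => (t - s) ^ (a - 1) * (s - r) ^ (b - 1)) volume r m := by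
    have h1 : IntervalIntegrable (fun s => (s - r) ^ (b - 1)) volume r m := by
      have h0 := intervalIntegrable_rpow' (a := 0) (b := m - r) (by linarith : (-1:ℝ) < b - 1)
      have h2 := h0.comp_sub_right r
      simpa using h2
    have hcont : ContinuousOn (fun s => (t - s) ^ (a - 1)) (Set.uIcc r m) := by
      apply ContinuousOn.rpow_const
      · exact (continuous_const.sub continuous_id).continuousOn
      · intro x hx
        rw [Set.uIcc_of_le hm1.le] at hx
        exact Or.inl (by have := hx.2; intro h; nlinarith [hx.2])
    exact h1.continuousOn_mul hcont
  have right : IntervalIntegrable (fun s => (t - s) ^ (a - 1) * (s - r) ^ (b - 1)) volume m t := by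
    have h1 : IntervalIntegrable (fun s => (t - s) ^ (a - 1)) volume m t := by
      have h0 := intervalIntegrable_rpow' (a := 0) (b := t - m) (by linarith : (-1:ℝ) < a - 1)
      have h2 := (h0.comp_sub_left t).symm
      simpa using h2
    have hcont : ContinuousOn (fun s => (s - r) ^ (b - 1)) (Set.uIcc m t) := by
      apply ContinuousOn.rpow_const
      · exact (continuous_id.sub continuous_const).continuousOn
      · intro x hx
        rw [Set.uIcc_of_le hm2.le] at hx
        exact Or.inl (by have := hx.1; intro h; nlinarith [hx.1])
    exact h1.mul_continuousOn hcont
  exact left.trans right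

open Real Set MeasureTheory intervalIntegral

lemma factorial_le_gamma {s : ℝ} (hs : 2 ≤ s) :
    ((Nat.floor (s - 1)).factorial : ℝ) ≤ Real.Gamma s := by
  set m := Nat.floor (s - 1) with hmdef
  have hm1 : 1 ≤ m := Nat.le_floor (by push_cast; linarith)
  have hms : (m : ℝ) ≤ s - 1 := Nat.floor_le (by linarith)
  have : ((m.factorial : ℝ)) = Real.Gamma (m + 1) := (Real.Gamma_nat_eq_factorial m).symm
  rw [this]
  apply (Real.Gamma_strictMonoOn_Ici.monotoneOn)
  · simp only [Set.mem_Ici]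
    have : (1:ℝ) ≤ m := by exact_mod_cast hm1
    linarith
  · simpa using hs
  · linarith

lemma sum_range_mul_comp_div {w : ℕ → ℝ} {m : ℕ} (hm : 0 < m) (n : ℕ) :
    ∑ k ∈ Finset.range (m * n), w (k / m) = m * ∑ q ∈ Finset.range n, w q := by
  induction n with
  | zero => simp
  | succ n ih =>
    rw [Nat.mul_succ, Finset.sum_range_add, ih]
    have : ∀ x ∈ Finset.range m, w ((m * n + x) / m) = w n := by
      intro x hx
      rw [Finset.mem_range] at hx
      congr 1
      rw [Nat.mul_add_div hm, Nat.div_eq_of_lt hx, add_zero]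
    rw [Finset.sum_congr rfl this, Finset.sum_const, Finset.card_range,
      Finset.sum_range_succ]
    ring

lemma summable_comp_div {w : ℕ → ℝ} (hw : Summable w) (hw0 : ∀ q, 0 ≤ w q) {m : ℕ}
    (hm : 0 < m) : Summable (fun k : ℕ => w (k / m)) := by
  apply summable_of_sum_range_le (c := m * ∑' q, w q) (fun k => hw0 _)
  intro n
  calc ∑ k ∈ Finset.range n, w (k / m)
      ≤ ∑ k ∈ Finset.range (m * n), w (k / m) := by
        apply Finset.sum_le_sum_of_subset_of_nonneg
        · exact Finset.range_subset_range.2 (Nat.le_mul_of_pos_left n hm)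
        · intro k _ _; exact hw0 _
    _ = m * ∑ q ∈ Finset.range n, w q := sum_range_mul_comp_div hm n
    _ ≤ m * ∑' q, w q := by
        apply mul_le_mul_of_nonneg_left _ (by positivity)
        exact hw.sum_le_tsum _ (fun q _ => hw0 q)

lemma summable_ml {β y c : ℝ} (hβ : 0 < β) (hy : 0 ≤ y) (hc : 0 ≤ c) (hc1 : c ≤ 1) :
    Summable (fun k : ℕ => y ^ k / Real.Gamma (k * β + c)) := by
  obtain ⟨m, hmβ⟩ : ∃ m : ℕ, 2 ≤ (m:ℝ) * β := by
    obtain ⟨m, hm⟩ := exists_nat_ge (2 / β)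
    exact ⟨m, by rw [div_le_iff₀ hβ] at hm; linarith⟩
  have hm0 : 0 < m := by
    by_contra h
    push_neg at h
    interval_cases m
    simp at hmβ
    linarith
  set M : ℝ := max 1 y with hMdef
  have hM1 : (1:ℝ) ≤ M := le_max_left _ _
  set w : ℕ → ℝ := fun q => M ^ m * (M ^ m) ^ q / q.factorial with hwdef
  have hw0 : ∀ q, 0 ≤ w q := fun q => by positivity
  have hwsum : Summable w := by
    have h1 : Summable (fun q : ℕ => (M ^ m) ^ q / q.factorial) :=
      Real.summable_pow_div_factorial (M ^ m)
    have := h1.mul_left (M ^ m)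
    apply this.congr
    intro q
    rw [hwdef]
    ring
  have key : ∀ k : ℕ, m ≤ k → y ^ k / Real.Gamma (k * β + c) ≤ w (k / m) := by
    intro k hk
    have hkβ : 2 ≤ (k:ℝ) * β := le_trans hmβ
      (mul_le_mul_of_nonneg_right (by exact_mod_cast hk) hβ.le)
    have harg : 2 ≤ (k:ℝ) * β + c := by linarith
    have hdiv_le : ((k / m : ℕ) : ℝ) ≤ (k:ℝ) * β + c - 1 := by
      have h1 : ((k / m : ℕ) : ℝ) ≤ (k : ℝ) / m := Nat.cast_div_le
      have h2 : (k : ℝ) / m ≤ (k:ℝ) * β / 2 := by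
        rw [div_le_div_iff₀ (by exact_mod_cast hm0) (by norm_num)]
        calc (k:ℝ) * 2 ≤ (k:ℝ) * ((m:ℝ) * β) :=
              mul_le_mul_of_nonneg_left hmβ (Nat.cast_nonneg k)
        _ = (k:ℝ) * β * m := by ring
      have h3 : (k:ℝ) * β / 2 ≤ (k:ℝ) * β - 1 := by linarith
      linarith
    have hfloor : (k / m : ℕ) ≤ Nat.floor ((k:ℝ) * β + c - 1) := Nat.le_floor hdiv_le
    have hfact : ((k / m : ℕ).factorial : ℝ) ≤ Real.Gamma ((k:ℝ) * β + c) :=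
      le_trans (by exact_mod_cast Nat.factorial_le hfloor) (factorial_le_gamma harg)
    have hnum : y ^ k ≤ M ^ m * (M ^ m) ^ (k / m) := by
      calc y ^ k ≤ M ^ k := pow_le_pow_left₀ (by linarith [le_max_right (1:ℝ) y, hy] : (0:ℝ) ≤ y) (le_max_right 1 y) k
      _ ≤ M ^ (m * (k / m + 1)) := by
          apply pow_le_pow_right₀ hM1
          exact le_of_lt (Nat.lt_mul_div_succ k hm0)
      _ = M ^ m * (M ^ m) ^ (k / m) := by
          rw [← pow_mul, ← pow_add]
          congr 1
          ring
    have hΓpos : 0 < Real.Gamma ((k:ℝ) * β + c) := Real.Gamma_pos_of_pos (by linarith)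
    have hfpos : (0:ℝ) < ((k / m : ℕ).factorial : ℝ) := by
      exact_mod_cast Nat.factorial_pos _
    calc y ^ k / Real.Gamma ((k:ℝ) * β + c)
        ≤ (M ^ m * (M ^ m) ^ (k / m)) / Real.Gamma ((k:ℝ) * β + c) :=
          (div_le_div_iff_of_pos_right hΓpos).2 hnum
    _ ≤ (M ^ m * (M ^ m) ^ (k / m)) / ((k / m : ℕ).factorial : ℝ) :=
          div_le_div_of_nonneg_left (by positivity) hfpos hfact
    _ = w (k / m) := rfl
  -- assemble: eventual comparison
  rw [← summable_nat_add_iff m]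
  apply Summable.of_nonneg_of_le
  · intro k
    have hΓpos : 0 < Real.Gamma (((k + m : ℕ):ℝ) * β + c) := by
      apply Real.Gamma_pos_of_pos
      have h1 : (1:ℝ) ≤ ((k + m : ℕ):ℝ) := by
        exact_mod_cast Nat.one_le_iff_ne_zero.2 (by omega)
      nlinarith
    positivity
  · intro k
    exact key (k + m) (Nat.le_add_left m k)
  · exact (summable_nat_add_iff m).mpr (summable_comp_div hwsum hw0 hm0)

lemma kernel_lintegral {c t : ℝ} (hc : 0 < c) (ht : 0 < t) :
    ∫⁻ s in Set.Ioc 0 t, ENNReal.ofReal ((t - s) ^ (c - 1))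
      = ENNReal.ofReal (t ^ c / c) := by
  have hint : IntervalIntegrable (fun s => (t - s) ^ (c - 1)) volume 0 t := by
    have h0 := intervalIntegrable_rpow' (a := 0) (b := t) (by linarith : (-1:ℝ) < c - 1)
    have h2 := (h0.comp_sub_left t).symm
    simpa using h2
  have hIoc : IntegrableOn (fun s => (t - s) ^ (c - 1)) (Set.Ioc 0 t) :=
    (intervalIntegrable_iff_integrableOn_Ioc_of_le ht.le).1 hint
  rw [← MeasureTheory.ofReal_integral_eq_lintegral_ofReal hIoc ?nn]
  case nn =>
    apply (ae_restrict_iff' measurableSet_Ioc).2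
    apply ae_of_all
    intro s hs
    exact Real.rpow_nonneg (by linarith [hs.2]) _
  congr 1
  rw [← intervalIntegral.integral_of_le ht.le,
    intervalIntegral.integral_comp_sub_left (fun x => x ^ (c - 1)) t]
  simp only [sub_self, sub_zero]
  rw [integral_rpow (Or.inl (by linarith : (-1:ℝ) < c - 1))]
  rw [show c - 1 + 1 = c by ring, Real.zero_rpow hc.ne']
  ring

lemma conv_step {β c t C g : ℝ} {u : ℝ → ℝ}
    (hβ : 0 < β) (hc : 0 < c) (ht : 0 < t) (hC : 0 ≤ C) (hg : 0 ≤ g)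
    (hmeas : AEMeasurable u (volume.restrict (Set.Ioc 0 t)))
    (hbase : ∀ s ∈ Set.Ioc 0 t, ENNReal.ofReal (u s)
      ≤ ENNReal.ofReal C + ENNReal.ofReal g *
          ∫⁻ r in Set.Ioc 0 s, ENNReal.ofReal ((s - r) ^ (β - 1)) * ENNReal.ofReal (u r)) :
    (∫⁻ s in Set.Ioc 0 t, ENNReal.ofReal ((t - s) ^ (c - 1)) * ENNReal.ofReal (u s))
      ≤ ENNReal.ofReal (C * (t ^ c / c))
        + ENNReal.ofReal (g * (Real.Gamma c * Real.Gamma β / Real.Gamma (c + β))) *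
          ∫⁻ s in Set.Ioc 0 t, ENNReal.ofReal ((t - s) ^ (c + β - 1)) * ENNReal.ofReal (u s) := by
  set K : ℝ → ℝ≥0∞ := fun s => ENNReal.ofReal ((t - s) ^ (c - 1)) with hK
  have hKmeas : Measurable K := by rw [hK]; fun_prop
  set inner : ℝ → ℝ≥0∞ := fun s =>
    ∫⁻ r in Set.Ioc 0 s, ENNReal.ofReal ((s - r) ^ (β - 1)) * ENNReal.ofReal (u r) with hinner
  -- Step 1: pointwise bound
  have step1 : (∫⁻ s in Set.Ioc 0 t, K s * ENNReal.ofReal (u s))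
      ≤ ∫⁻ s in Set.Ioc 0 t, (K s * ENNReal.ofReal C + K s * (ENNReal.ofReal g * inner s)) := by
    apply lintegral_mono_ae
    rw [ae_restrict_iff' measurableSet_Ioc]
    apply ae_of_all
    intro s hs
    rw [← mul_add]
    exact mul_le_mul_right (hbase s hs) (K s)
  -- Step 2: split and compute first piece
  have step2 : (∫⁻ s in Set.Ioc 0 t, (K s * ENNReal.ofReal C + K s * (ENNReal.ofReal g * inner s)))
      = ENNReal.ofReal (C * (t ^ c / c))
        + ENNReal.ofReal g * ∫⁻ s in Set.Ioc 0 t, K s * inner s := by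
    rw [lintegral_add_left (hKmeas.mul_const _)]
    congr 1
    · simp_rw [mul_comm (K _) (ENNReal.ofReal C)]
      rw [lintegral_const_mul' _ _ ENNReal.ofReal_ne_top, kernel_lintegral hc ht,
        ← ENNReal.ofReal_mul hC]
    · simp_rw [mul_left_comm (K _) (ENNReal.ofReal g) (inner _)]
      rw [lintegral_const_mul' _ _ ENNReal.ofReal_ne_top]
  set Q : ℝ := Real.Gamma c * Real.Gamma β / Real.Gamma (c + β) with hQ
  have hQ0 : 0 ≤ Q := by
    rw [hQ]
    exact div_nonneg (mul_nonneg (Real.Gamma_pos_of_pos hc).le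
      (Real.Gamma_pos_of_pos hβ).le) (Real.Gamma_pos_of_pos (by linarith)).le
  set F : ℝ → ℝ → ℝ≥0∞ := fun s r =>
    Set.indicator {p : ℝ × ℝ | p.2 < p.1 ∧ p.1 < t}
      (fun p => ENNReal.ofReal ((t - p.1) ^ (c - 1) * (p.1 - p.2) ^ (β - 1))) (s, r)
      * ENNReal.ofReal (u r) with hF
  have hrestr : volume.restrict (Set.Ioc 0 t) = volume.restrict (Set.Ioo 0 t) :=
    (Measure.restrict_congr_set Ioo_ae_eq_Ioc).symm
  have step3 : (∫⁻ s in Set.Ioc 0 t, K s * inner s)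
      = ∫⁻ s in Set.Ioc 0 t, ∫⁻ r in Set.Ioc 0 t, F s r := by
    rw [hrestr]
    apply (setLIntegral_congr_fun measurableSet_Ioo ?_).symm
    intro s hs
    have hpt : ∀ r, F s r = Set.indicator (Set.Iio s)
        (fun r => ENNReal.ofReal ((t - s) ^ (c - 1) * (s - r) ^ (β - 1))
          * ENNReal.ofReal (u r)) r := by
      intro r
      rw [hF]
      simp only [Set.indicator_apply, Set.mem_setOf_eq, Set.mem_Iio]
      by_cases h : r < s
      · simp [h, hs.2]
      · simp [h]
    beta_reduce
    rw [lintegral_congr hpt, lintegral_indicator measurableSet_Iio,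
      Measure.restrict_restrict measurableSet_Iio]
    have hset : Set.Iio s ∩ Set.Ioo 0 t = Set.Ioo 0 s := by
      ext r
      simp only [Set.mem_inter_iff, Set.mem_Iio, Set.mem_Ioo]
      constructor
      · rintro ⟨h1, h2, h3⟩; exact ⟨h2, h1⟩
      · rintro ⟨h1, h2⟩; exact ⟨h2, h1, by linarith [hs.2]⟩
    rw [hset]
    have hsplit : ∀ r, ENNReal.ofReal ((t - s) ^ (c - 1) * (s - r) ^ (β - 1))
          * ENNReal.ofReal (u r)
        = K s * (ENNReal.ofReal ((s - r) ^ (β - 1)) * ENNReal.ofReal (u r)) := by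
      intro r
      rw [hK, ENNReal.ofReal_mul (Real.rpow_nonneg (by linarith [hs.2]) _), mul_assoc]
    rw [lintegral_congr hsplit, lintegral_const_mul' _ _ ENNReal.ofReal_ne_top,
      Measure.restrict_congr_set Ioo_ae_eq_Ioc]
  have hFmeas : AEMeasurable (Function.uncurry F)
      ((volume.restrict (Set.Ioc 0 t)).prod (volume.restrict (Set.Ioc 0 t))) := by
    apply AEMeasurable.mul
    · apply Measurable.aemeasurable
      apply Measurable.indicator
      · fun_prop
      · exact (measurableSet_lt measurable_snd measurable_fst).inter
          (measurableSet_lt measurable_fst measurable_const)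
    · exact (ENNReal.measurable_ofReal.comp_aemeasurable hmeas).comp_snd
  have step4 : (∫⁻ s in Set.Ioc 0 t, ∫⁻ r in Set.Ioc 0 t, F s r)
      = ∫⁻ r in Set.Ioc 0 t, ∫⁻ s in Set.Ioc 0 t, F s r :=
    lintegral_lintegral_swap hFmeas
  have step5 : (∫⁻ r in Set.Ioc 0 t, ∫⁻ s in Set.Ioc 0 t, F s r)
      = ENNReal.ofReal Q *
          ∫⁻ r in Set.Ioc 0 t, ENNReal.ofReal ((t - r) ^ (c + β - 1)) * ENNReal.ofReal (u r) := by
    rw [hrestr, ← lintegral_const_mul' _ _ ENNReal.ofReal_ne_top]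
    apply setLIntegral_congr_fun measurableSet_Ioo ?_
    intro r hr
    have hptF : ∀ s, F s r = Set.indicator (Set.Ioo r t)
        (fun s => ENNReal.ofReal ((t - s) ^ (c - 1) * (s - r) ^ (β - 1))) s
          * ENNReal.ofReal (u r) := by
      intro s
      rw [hF]
      simp only [Set.indicator_apply, Set.mem_setOf_eq, Set.mem_Ioo]
    beta_reduce
    rw [lintegral_congr hptF, lintegral_mul_const' _ _ ENNReal.ofReal_ne_top,
      lintegral_indicator measurableSet_Ioo, Measure.restrict_restrict measurableSet_Ioo]
    have hset2 : Set.Ioo r t ∩ Set.Ioo 0 t = Set.Ioo r t := by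
      apply Set.inter_eq_self_of_subset_left
      intro x hx
      exact ⟨lt_trans hr.1 hx.1, hx.2⟩
    rw [hset2]
    have hbeta_int : IntegrableOn (fun s => (t - s) ^ (c - 1) * (s - r) ^ (β - 1))
        (Set.Ioo r t) :=
      (((intervalIntegrable_iff_integrableOn_Ioc_of_le hr.2.le).1
        (beta_integrable_s9 hc hβ hr.2)).mono_set Set.Ioo_subset_Ioc_self)
    rw [← MeasureTheory.ofReal_integral_eq_lintegral_ofReal hbeta_int ?pos]
    case pos =>
      apply (ae_restrict_iff' measurableSet_Ioo).2
      apply ae_of_all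
      intro x hx
      exact mul_nonneg (Real.rpow_nonneg (by linarith [hx.2]) _)
        (Real.rpow_nonneg (by linarith [hx.1]) _)
    rw [← integral_Ioc_eq_integral_Ioo, ← intervalIntegral.integral_of_le hr.2.le,
      beta_value hc hβ hr.2, ← hQ,
      ENNReal.ofReal_mul (Real.rpow_nonneg (by linarith [hr.2]) _)]
    ring
  calc (∫⁻ s in Set.Ioc 0 t, ENNReal.ofReal ((t - s) ^ (c - 1)) * ENNReal.ofReal (u s))
      ≤ ∫⁻ s in Set.Ioc 0 t, (K s * ENNReal.ofReal C
          + K s * (ENNReal.ofReal g * inner s)) := step1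
    _ = ENNReal.ofReal (C * (t ^ c / c))
        + ENNReal.ofReal g * ∫⁻ s in Set.Ioc 0 t, K s * inner s := step2
    _ = ENNReal.ofReal (C * (t ^ c / c))
        + ENNReal.ofReal g * (ENNReal.ofReal Q *
            ∫⁻ s in Set.Ioc 0 t, ENNReal.ofReal ((t - s) ^ (c + β - 1))
              * ENNReal.ofReal (u s)) := by rw [step3, step4, step5]
    _ = _ := by rw [← mul_assoc, ← ENNReal.ofReal_mul hg]

/-- Generalized Gronwall inequality, constant case. -/
theorem generalized_gronwall_const (T β C g : ℝ) (u : ℝ → ℝ)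
    (hβ : 0 < β) (hT : 0 < T) (hC : 0 ≤ C) (hg : 0 ≤ g)
    (hu_nonneg : ∀ t ∈ Set.Ico (0:ℝ) T, 0 ≤ u t)
    (hu_int : ∀ t ∈ Set.Ico (0:ℝ) T, IntegrableOn u (Set.Icc 0 t))
    (hu : ∀ t ∈ Set.Ico (0:ℝ) T,
      u t ≤ C + g * ∫ s in (0:ℝ)..t, (t - s) ^ (β - 1) * u s) :
    ∀ t ∈ Set.Ico (0:ℝ) T,
      u t ≤ C * mittagLeffler β (g * Real.Gamma β * t ^ β) := by
  intro t ht
  obtain ⟨ht0, htT⟩ := ht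
  have hΓβ : (0:ℝ) < Real.Gamma β := Real.Gamma_pos_of_pos hβ
  rcases eq_or_lt_of_le ht0 with h0 | htpos
  · -- t = 0
    have hu0 : u t ≤ C := by
      have := hu t ⟨ht0, htT⟩
      rw [← h0] at this ⊢
      simpa using this
    have hml : mittagLeffler β (g * Real.Gamma β * t ^ β) = 1 := by
      rw [← h0, Real.zero_rpow hβ.ne', mul_zero]
      unfold mittagLeffler
      rw [tsum_eq_single 0]
      · norm_num [Real.Gamma_one]
      · intro k hk
        simp [zero_pow hk]
    rw [hml, mul_one]
    exact hu0
  · -- main case : 0 < t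
    set x : ℝ := g * Real.Gamma β * t ^ β with hxdef
    have hx0 : 0 ≤ x := by positivity
    have hsum : Summable (fun k : ℕ => x ^ k / Real.Gamma (k * β + 1)) :=
      summable_ml hβ hx0 zero_le_one le_rfl
    have hterm0 : ∀ k : ℕ, 0 ≤ x ^ k / Real.Gamma (k * β + 1) := by
      intro k
      have : 0 < Real.Gamma (k * β + 1) := Real.Gamma_pos_of_pos (by positivity)
      positivity
    have hML0 : 0 ≤ mittagLeffler β x := tsum_nonneg hterm0
    -- measurability
    have hmeas : AEMeasurable u (volume.restrict (Set.Ioc 0 t)) :=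
      ((hu_int t ⟨ht0, htT⟩).aestronglyMeasurable.aemeasurable).mono_measure
        (Measure.restrict_mono Set.Ioc_subset_Icc_self le_rfl)
    -- base inequality in ℝ≥0∞ for all s ∈ Ioc 0 t (in fact any s ∈ Ico 0 T)
    have hbase : ∀ s ∈ Set.Ioc 0 t, ENNReal.ofReal (u s)
        ≤ ENNReal.ofReal C + ENNReal.ofReal g *
            ∫⁻ r in Set.Ioc 0 s, ENNReal.ofReal ((s - r) ^ (β - 1)) * ENNReal.ofReal (u r) := by
      intro s hs
      have hsT : s ∈ Set.Ico (0:ℝ) T := ⟨hs.1.le, lt_of_le_of_lt hs.2 htT⟩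
      have hus := hu s hsT
      set I : ℝ := ∫ r in (0:ℝ)..s, (s - r) ^ (β - 1) * u r with hI
      have hI0 : 0 ≤ I := by
        apply intervalIntegral.integral_nonneg hs.1.le
        intro r hr
        apply mul_nonneg (Real.rpow_nonneg (by linarith [hr.2]) _)
        exact hu_nonneg r ⟨hr.1, lt_of_le_of_lt (le_trans hr.2 hs.2) htT⟩
      have h1 : ENNReal.ofReal (u s) ≤ ENNReal.ofReal (C + g * I) :=
        ENNReal.ofReal_le_ofReal hus
      have h2 : ENNReal.ofReal (C + g * I)
          = ENNReal.ofReal C + ENNReal.ofReal g * ENNReal.ofReal I := by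
        rw [ENNReal.ofReal_add hC (mul_nonneg hg hI0), ENNReal.ofReal_mul hg]
      have h3 : ENNReal.ofReal I
          ≤ ∫⁻ r in Set.Ioc 0 s, ENNReal.ofReal ((s - r) ^ (β - 1)) * ENNReal.ofReal (u r) := by
        rw [hI, intervalIntegral.integral_of_le hs.1.le]
        by_cases hint : IntegrableOn (fun r => (s - r) ^ (β - 1) * u r) (Set.Ioc 0 s)
        · rw [MeasureTheory.ofReal_integral_eq_lintegral_ofReal hint ?nn]
          case nn =>
            apply (ae_restrict_iff' measurableSet_Ioc).2
            apply ae_of_all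
            intro r hr
            apply mul_nonneg (Real.rpow_nonneg (by linarith [hr.2]) _)
            exact hu_nonneg r ⟨hr.1.le, lt_of_le_of_lt (le_trans hr.2 hs.2) htT⟩
          apply lintegral_mono_ae
          rw [ae_restrict_iff' measurableSet_Ioc]
          apply ae_of_all
          intro r hr
          rw [ENNReal.ofReal_mul (Real.rpow_nonneg (by linarith [hr.2]) _)]
        · rw [MeasureTheory.integral_undef hint]
          simp
      calc ENNReal.ofReal (u s) ≤ ENNReal.ofReal C + ENNReal.ofReal g * ENNReal.ofReal I := by
            rw [← h2]; exact h1
        _ ≤ _ := by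
            apply add_le_add_right
            exact mul_le_mul_right h3 _
    -- iterated kernels
    set R : ℝ → ℝ≥0∞ := fun c =>
      ∫⁻ s in Set.Ioc 0 t, ENNReal.ofReal ((t - s) ^ (c - 1)) * ENNReal.ofReal (u s) with hR
    have hxpow : ∀ n : ℕ, x ^ n = g ^ n * Real.Gamma β ^ n * t ^ ((n:ℝ) * β) := by
      intro n
      rw [hxdef, mul_pow, mul_pow, ← Real.rpow_natCast (t ^ β) n, ← Real.rpow_mul ht0,
        mul_comm β (n:ℝ)]
    have QQ : ∀ n : ℕ, ENNReal.ofReal (u t)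
        ≤ ENNReal.ofReal (C * ∑ k ∈ Finset.range (n+1), x ^ k / Real.Gamma (k * β + 1))
          + ENNReal.ofReal (g ^ (n+1) * Real.Gamma β ^ (n+1) / Real.Gamma (((n+1:ℕ):ℝ) * β))
            * R (((n+1:ℕ):ℝ) * β) := by
      intro n
      induction n with
      | zero =>
        have h := hbase t ⟨htpos, le_rfl⟩
        have e3 : ((0+1:ℕ):ℝ) * β = β := by push_cast; ring
        rw [e3]
        have e1 : C * ∑ k ∈ Finset.range (0+1), x ^ k / Real.Gamma (k * β + 1) = C := by
          norm_num [Real.Gamma_one]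
        rw [e1]
        have e2 : g ^ (0+1) * Real.Gamma β ^ (0+1) / Real.Gamma β = g := by
          field_simp
          ring
        rw [e2]
        exact h
      | succ n ih =>
        have hn1 : (0:ℝ) < ((n+1:ℕ):ℝ) := by positivity
        have hcn : (0:ℝ) < ((n+1:ℕ):ℝ) * β := by positivity
        have hΓcn : (0:ℝ) < Real.Gamma (((n+1:ℕ):ℝ) * β) := Real.Gamma_pos_of_pos hcn
        have hbn0 : (0:ℝ) ≤ g ^ (n+1) * Real.Gamma β ^ (n+1)
            / Real.Gamma (((n+1:ℕ):ℝ) * β) := by positivity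
        have hstep := conv_step (c := ((n+1:ℕ):ℝ) * β) hβ hcn htpos hC hg hmeas hbase
        have hterm : (0:ℝ) ≤ C * ∑ k ∈ Finset.range (n+1), x ^ k / Real.Gamma (k * β + 1) := by
          apply mul_nonneg hC
          apply Finset.sum_nonneg
          intro k _
          exact hterm0 k
        have hSn1 : (0:ℝ) ≤ C * (x ^ (n+1) / Real.Gamma (((n+1:ℕ):ℝ) * β + 1)) := by
          have := Real.Gamma_pos_of_pos (show (0:ℝ) < ((n+1:ℕ):ℝ) * β + 1 by positivity)
          positivity
        have id1 : g ^ (n+1) * Real.Gamma β ^ (n+1) / Real.Gamma (((n+1:ℕ):ℝ) * β)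
              * (C * (t ^ (((n+1:ℕ):ℝ) * β) / (((n+1:ℕ):ℝ) * β)))
            = C * (x ^ (n+1) / Real.Gamma (((n+1:ℕ):ℝ) * β + 1)) := by
          rw [Real.Gamma_add_one hcn.ne', hxpow (n+1)]
          push_cast
          field_simp
        have id2 : g ^ (n+1) * Real.Gamma β ^ (n+1) / Real.Gamma (((n+1:ℕ):ℝ) * β)
              * (g * (Real.Gamma (((n+1:ℕ):ℝ) * β) * Real.Gamma β
                  / Real.Gamma (((n+1:ℕ):ℝ) * β + β)))
            = g ^ (n+1+1) * Real.Gamma β ^ (n+1+1) / Real.Gamma (((n+1+1:ℕ):ℝ) * β) := by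
          have hβsum : ((n+1+1:ℕ):ℝ) * β = ((n+1:ℕ):ℝ) * β + β := by push_cast; ring
          rw [hβsum]
          have hΓs : (0:ℝ) < Real.Gamma (((n+1:ℕ):ℝ) * β + β) :=
            Real.Gamma_pos_of_pos (by positivity)
          field_simp
          ring
        calc ENNReal.ofReal (u t)
            ≤ ENNReal.ofReal (C * ∑ k ∈ Finset.range (n+1), x ^ k / Real.Gamma (k * β + 1))
              + ENNReal.ofReal (g ^ (n+1) * Real.Gamma β ^ (n+1)
                  / Real.Gamma (((n+1:ℕ):ℝ) * β)) * R (((n+1:ℕ):ℝ) * β) := ih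
          _ ≤ ENNReal.ofReal (C * ∑ k ∈ Finset.range (n+1), x ^ k / Real.Gamma (k * β + 1))
              + ENNReal.ofReal (g ^ (n+1) * Real.Gamma β ^ (n+1)
                  / Real.Gamma (((n+1:ℕ):ℝ) * β))
                * (ENNReal.ofReal (C * (t ^ (((n+1:ℕ):ℝ) * β) / (((n+1:ℕ):ℝ) * β)))
                  + ENNReal.ofReal (g * (Real.Gamma (((n+1:ℕ):ℝ) * β) * Real.Gamma β
                      / Real.Gamma (((n+1:ℕ):ℝ) * β + β)))
                    * R (((n+1:ℕ):ℝ) * β + β)) := by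
              exact add_le_add_right (mul_le_mul_right hstep _) _
          _ = _ := by
              rw [mul_add, ← ENNReal.ofReal_mul hbn0, id1, ← add_assoc,
                ← ENNReal.ofReal_add hterm hSn1, ← mul_assoc,
                ← ENNReal.ofReal_mul hbn0, id2]
              congr 2
              · rw [Finset.sum_range_succ (fun k => x ^ k / Real.Gamma (k * β + 1)) (n+1)]
                ring
              · push_cast
                ring
    -- finiteness of ∫⁻ u
    set IU : ℝ≥0∞ := ∫⁻ s in Set.Ioc 0 t, ENNReal.ofReal (u s) with hIUdef
    have hIUfin : IU ≠ ⊤ := by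
      have hint := (hu_int t ⟨ht0, htT⟩).mono_set Set.Ioc_subset_Icc_self
      apply ne_of_lt
      apply lt_of_le_of_lt _ hint.2
      apply lintegral_mono
      intro s
      exact Real.ofReal_le_enorm (u s)
    set J : ℝ := IU.toReal with hJdef
    have hJ0 : 0 ≤ J := ENNReal.toReal_nonneg
    have hIUJ : IU = ENNReal.ofReal J := (ENNReal.ofReal_toReal hIUfin).symm
    -- kernel bound for large n
    have hkb : ∀ n : ℕ, (1:ℝ) ≤ ((n+1:ℕ):ℝ) * β →
        R (((n+1:ℕ):ℝ) * β) ≤ ENNReal.ofReal (t ^ (((n+1:ℕ):ℝ) * β - 1)) * IU := by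
      intro n hn
      calc R (((n+1:ℕ):ℝ) * β)
          ≤ ∫⁻ s in Set.Ioc 0 t,
              ENNReal.ofReal (t ^ (((n+1:ℕ):ℝ) * β - 1)) * ENNReal.ofReal (u s) := by
            apply lintegral_mono_ae
            rw [ae_restrict_iff' measurableSet_Ioc]
            apply ae_of_all
            intro s hs
            apply mul_le_mul_left
            apply ENNReal.ofReal_le_ofReal
            apply Real.rpow_le_rpow (by linarith [hs.2]) (by linarith [hs.1]) (by linarith)
        _ = _ := lintegral_const_mul' _ _ ENNReal.ofReal_ne_top
    -- the epsilon sequence tends to zero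
    have hdecay : Filter.Tendsto
        (fun n : ℕ => x ^ (n+1) / Real.Gamma (((n+1:ℕ):ℝ) * β) * (J / t))
        Filter.atTop (nhds 0) := by
      have hs0 : Summable (fun k : ℕ => x ^ k / Real.Gamma (k * β)) := by
        have h := summable_ml hβ hx0 le_rfl zero_le_one
        apply h.congr
        intro k
        rw [add_zero]
      have h1 := hs0.tendsto_atTop_zero
      have h2 : Filter.Tendsto (fun n : ℕ => x ^ (n+1) / Real.Gamma (((n+1:ℕ):ℝ) * β))
          Filter.atTop (nhds 0) := h1.comp (Filter.tendsto_add_atTop_nat 1)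
      simpa using h2.mul_const (J / t)
    -- conclude
    have hfinal : ∀ δ : ℝ, 0 < δ → u t ≤ C * mittagLeffler β x + δ := by
      intro δ hδ
      have hev1 : ∀ᶠ n : ℕ in Filter.atTop,
          x ^ (n+1) / Real.Gamma (((n+1:ℕ):ℝ) * β) * (J / t) < δ :=
        hdecay.eventually_lt_const hδ
      have hev2 : ∀ᶠ n : ℕ in Filter.atTop, (1:ℝ) ≤ ((n+1:ℕ):ℝ) * β := by
        obtain ⟨N, hN⟩ := exists_nat_ge (1 / β)
        rw [Filter.eventually_atTop]
        refine ⟨N, fun n hn => ?_⟩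
        have h1 : (1:ℝ) / β ≤ (n:ℝ) + 1 := by
          have : (N:ℝ) ≤ (n:ℝ) := by exact_mod_cast hn
          linarith
        have := (div_le_iff₀ hβ).1 h1
        push_cast
        linarith
      obtain ⟨n, hn1, hn2⟩ := (hev1.and hev2).exists
      -- chain of bounds in ℝ≥0∞
      have hΓcn : (0:ℝ) < Real.Gamma (((n+1:ℕ):ℝ) * β) :=
        Real.Gamma_pos_of_pos (by positivity)
      have hbn0 : (0:ℝ) ≤ g ^ (n+1) * Real.Gamma β ^ (n+1)
          / Real.Gamma (((n+1:ℕ):ℝ) * β) := by positivity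
      have id3 : g ^ (n+1) * Real.Gamma β ^ (n+1) / Real.Gamma (((n+1:ℕ):ℝ) * β)
            * (t ^ (((n+1:ℕ):ℝ) * β - 1) * J)
          = x ^ (n+1) / Real.Gamma (((n+1:ℕ):ℝ) * β) * (J / t) := by
        rw [Real.rpow_sub htpos, Real.rpow_one, hxpow (n+1)]
        push_cast
        field_simp
      have hchain : ENNReal.ofReal (u t)
          ≤ ENNReal.ofReal (C * mittagLeffler β x + δ) := by
        calc ENNReal.ofReal (u t)
            ≤ ENNReal.ofReal (C * ∑ k ∈ Finset.range (n+1), x ^ k / Real.Gamma (k * β + 1))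
              + ENNReal.ofReal (g ^ (n+1) * Real.Gamma β ^ (n+1)
                  / Real.Gamma (((n+1:ℕ):ℝ) * β)) * R (((n+1:ℕ):ℝ) * β) := QQ n
          _ ≤ ENNReal.ofReal (C * ∑ k ∈ Finset.range (n+1), x ^ k / Real.Gamma (k * β + 1))
              + ENNReal.ofReal (g ^ (n+1) * Real.Gamma β ^ (n+1)
                  / Real.Gamma (((n+1:ℕ):ℝ) * β))
                * (ENNReal.ofReal (t ^ (((n+1:ℕ):ℝ) * β - 1)) * IU) :=
              add_le_add_right (mul_le_mul_right (hkb n hn2) _) _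
          _ = ENNReal.ofReal (C * ∑ k ∈ Finset.range (n+1), x ^ k / Real.Gamma (k * β + 1))
              + ENNReal.ofReal (x ^ (n+1) / Real.Gamma (((n+1:ℕ):ℝ) * β) * (J / t)) := by
              rw [hIUJ, ← ENNReal.ofReal_mul (Real.rpow_nonneg ht0 _),
                ← ENNReal.ofReal_mul hbn0, id3]
          _ ≤ ENNReal.ofReal (C * mittagLeffler β x)
              + ENNReal.ofReal δ := by
              apply add_le_add
              · apply ENNReal.ofReal_le_ofReal
                apply mul_le_mul_of_nonneg_left _ hC
                exact hsum.sum_le_tsum _ (fun k _ => hterm0 k)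
              · exact ENNReal.ofReal_le_ofReal hn1.le
          _ = _ := by
              rw [← ENNReal.ofReal_add (mul_nonneg hC hML0) hδ.le]
      have hrhs0 : 0 ≤ C * mittagLeffler β x + δ := by positivity
      exact (ENNReal.ofReal_le_ofReal_iff hrhs0).1 hchain
    exact le_of_forall_pos_le_add hfinal
end
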